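/- (α* implements unitaries between the eigenspaces.) Let H be a complex Hilbert space, q ∈ ℝ with 0 < |q| < 1, and α a bounded operator on H satisfying α α* − q² α* α = (1 − q²)·1; set Γ := 1 − α* α, assume Γ injective, and let P_k and E_k := P_k − P_{k+1} be as constructed from the Neumann series. Then for every k ≥ 0 and every ξ in the range of E_k: α* ξ lies in the range of E_{k+1} and ‖α* ξ‖² = (1 − q^{2(k+1)}) ‖ξ‖²; conversely, for every η in the range of E_{k+1}: α η lies in the range of E_k and ‖α η‖² = (1 − q^{2(k+1)}) ‖η‖². In particular, α*/√(1 − q^{2(k+1)}) restricted to E_k H and α/√(1 − q^{2(k+1)}) restricted to E_{k+1} H are an inverse pair of unitaries between E_k H and E_{k+1} H. -/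

import Mathlib

open ContinuousLinearMap
open scoped ComplexInnerProductSpace
set_option linter.unusedSectionVars false
set_option linter.deprecated false

/-- Given `α` and `q`, let `Γ := 1 − α* α` and define
`P_k := (α*)^k (1 − q²Γ)⁻¹ (1 − q⁴Γ)⁻¹ ⋯ (1 − q^{2k}Γ)⁻¹ α^k` (with `P_0 = 1`),
where the inverses are taken in the Banach algebra `B(H)` (via `Ring.inverse`). -/
noncomputable def qCCRProj {H : Type*} [NormedAddCommGroup H] [InnerProductSpace ℂ H]
    [CompleteSpace H] (q : ℝ) (α : H →L[ℂ] H) (k : ℕ) : H →L[ℂ] H :=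
  (adjoint α) ^ k *
    ((List.range k).map (fun j =>
      Ring.inverse ((1 : H →L[ℂ] H) -
        ((q : ℂ) ^ (2 * (j + 1))) • ((1 : H →L[ℂ] H) - adjoint α * α)))).prod *
    α ^ k

/-- The spectral projections `E_k := P_k − P_{k+1}`. -/
noncomputable def qCCRSpec {H : Type*} [NormedAddCommGroup H] [InnerProductSpace ℂ H]
    [CompleteSpace H] (q : ℝ) (α : H →L[ℂ] H) (k : ℕ) : H →L[ℂ] H :=
  qCCRProj q α k - qCCRProj q α (k + 1)

namespace QCCRAux

variable {H : Type*} [NormedAddCommGroup H] [InnerProductSpace ℂ H] [CompleteSpace H]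

/-- `Γ = 1 - α* α`. -/
noncomputable def G (α : H →L[ℂ] H) : H →L[ℂ] H := 1 - adjoint α * α

/-- `C j = 1 - q^{2j} Γ`. -/
noncomputable def C (q : ℝ) (α : H →L[ℂ] H) (j : ℕ) : H →L[ℂ] H :=
  1 - ((q : ℂ) ^ (2 * j)) • G α

/-- `D k = ∏_{j=1}^k C_j⁻¹`. -/
noncomputable def D (q : ℝ) (α : H →L[ℂ] H) (k : ℕ) : H →L[ℂ] H :=
  ((List.range k).map (fun j => Ring.inverse (C q α (j + 1)))).prod

variable (q : ℝ) (α : H →L[ℂ] H)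

theorem mul_adj
    (hccr : α * adjoint α - ((q : ℂ) ^ 2) • (adjoint α * α) =
      ((1 : ℂ) - (q : ℂ) ^ 2) • (1 : H →L[ℂ] H)) :
    α * adjoint α = C q α 1 := by
  rw [sub_eq_iff_eq_add] at hccr
  rw [hccr]
  unfold C G
  rw [show (2 * 1 : ℕ) = 2 by norm_num]
  rw [smul_sub, sub_smul, one_smul]
  abel

section CCR

variable (hccr : α * adjoint α - ((q : ℂ) ^ 2) • (adjoint α * α) =
      ((1 : ℂ) - (q : ℂ) ^ 2) • (1 : H →L[ℂ] H))
include hccr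

theorem aG : α * G α = ((q : ℂ) ^ 2) • (G α * α) := by
  have h := mul_adj q α hccr
  unfold G
  rw [mul_sub, mul_one, ← mul_assoc, h]
  unfold C G
  rw [show (2 * 1 : ℕ) = 2 by norm_num, sub_mul, one_mul, smul_mul_assoc]
  abel

theorem Ga : G α * adjoint α = ((q : ℂ) ^ 2) • (adjoint α * G α) := by
  have h := mul_adj q α hccr
  unfold G
  rw [sub_mul, one_mul, mul_assoc, h]
  unfold C G
  rw [show (2 * 1 : ℕ) = 2 by norm_num, mul_sub, mul_one, mul_smul_comm]
  abel

theorem aC (j : ℕ) : α * C q α j = C q α (j + 1) * α := by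
  unfold C
  rw [mul_sub, mul_one, mul_smul_comm, aG q α hccr, sub_mul, one_mul, smul_mul_assoc,
    smul_smul, ← pow_add, Nat.mul_succ]

theorem Ca (j : ℕ) : C q α j * adjoint α = adjoint α * C q α (j + 1) := by
  unfold C
  rw [sub_mul, one_mul, smul_mul_assoc, Ga q α hccr, mul_sub, mul_one, mul_smul_comm,
    smul_smul, ← pow_add, Nat.mul_succ]

theorem norm_le_one (hq1 : |q| < 1) : ‖α‖ ≤ 1 := by
  have hq2 : q ^ 2 < 1 := by nlinarith [abs_nonneg q, sq_abs q]
  have h2 : α * adjoint α = ((1:ℂ) - (q:ℂ)^2) • (1 : H →L[ℂ] H) +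
      ((q:ℂ)^2) • (adjoint α * α) := by
    have := hccr; rw [sub_eq_iff_eq_add] at this; exact this
  have e1 : ‖α * adjoint α‖ = ‖α‖ * ‖α‖ := by
    rw [← star_eq_adjoint]; exact CStarRing.norm_self_mul_star
  have e2 : ‖adjoint α * α‖ = ‖α‖ * ‖α‖ := by
    rw [← star_eq_adjoint]; exact CStarRing.norm_star_mul_self
  have n1 : ‖((1:ℂ) - (q:ℂ)^2)‖ = 1 - q^2 := by
    rw [show ((1:ℂ) - (q:ℂ)^2) = (((1 - q^2 : ℝ)):ℂ) by push_cast; ring]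
    rw [Complex.norm_real, Real.norm_eq_abs, abs_of_pos (by linarith)]
  have n2 : ‖((q:ℂ)^2)‖ = q^2 := by
    rw [norm_pow, Complex.norm_real, Real.norm_eq_abs, sq_abs]
  have hb : ‖α‖ * ‖α‖ ≤ (1 - q^2) * 1 + q^2 * (‖α‖ * ‖α‖) := by
    calc ‖α‖ * ‖α‖ = ‖α * adjoint α‖ := e1.symm
    _ ≤ ‖((1:ℂ) - (q:ℂ)^2) • (1 : H →L[ℂ] H)‖ + ‖((q:ℂ)^2) • (adjoint α * α)‖ := by
        rw [h2]; exact norm_add_le _ _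
    _ ≤ (1 - q^2) * 1 + q^2 * (‖α‖ * ‖α‖) := by
        rw [norm_smul, norm_smul, n1, n2, e2]
        have h1 : ‖(1 : H →L[ℂ] H)‖ ≤ 1 := by
          rw [ContinuousLinearMap.one_def]; exact norm_id_le
        have : (0:ℝ) ≤ 1 - q^2 := by linarith
        nlinarith
  nlinarith [norm_nonneg α, sq_nonneg (‖α‖ - 1), hq2]

theorem normG_le_one (hq1 : |q| < 1) : ‖G α‖ ≤ 1 := by
  have hα := norm_le_one q α hccr hq1
  refine ContinuousLinearMap.opNorm_le_bound _ zero_le_one fun x => ?_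
  rw [one_mul]
  have hGx : G α x = x - adjoint α (α x) := by
    simp [G, ContinuousLinearMap.sub_apply, ContinuousLinearMap.mul_apply,
      ContinuousLinearMap.one_apply]
  have hadj : ‖adjoint α (α x)‖ ≤ ‖α x‖ := by
    calc ‖adjoint α (α x)‖ ≤ ‖adjoint α‖ * ‖α x‖ := le_opNorm _ _
    _ ≤ 1 * ‖α x‖ := by
        have : ‖adjoint α‖ = ‖α‖ := by rw [← star_eq_adjoint]; exact norm_star α
        rw [this]; exact mul_le_mul_of_nonneg_right hα (norm_nonneg _)
    _ = ‖α x‖ := one_mul _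
  have key : ‖G α x‖^2 ≤ ‖x‖^2 := by
    rw [hGx, norm_sub_sq (𝕜 := ℂ)]
    have h1 : RCLike.re (inner ℂ x (adjoint α (α x)) : ℂ) = ‖α x‖^2 := by
      rw [adjoint_inner_right]; exact inner_self_eq_norm_sq (𝕜 := ℂ) _
    rw [h1]
    nlinarith [norm_nonneg (α x), norm_nonneg (adjoint α (α x))]
  exact le_of_pow_le_pow_left₀ two_ne_zero (norm_nonneg x) key

theorem isUnitC (hq1 : |q| < 1) (j : ℕ) : IsUnit (C q α (j + 1)) := by
  have hn : ‖((q:ℂ)^(2*(j+1))) • G α‖ < 1 := by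
    rw [norm_smul]
    have h1 : ‖(q:ℂ)^(2*(j+1))‖ = |q|^(2*(j+1)) := by
      rw [norm_pow, Complex.norm_real, Real.norm_eq_abs]
    rw [h1]
    calc |q|^(2*(j+1)) * ‖G α‖ ≤ |q|^(2*(j+1)) * 1 :=
          mul_le_mul_of_nonneg_left (normG_le_one q α hccr hq1)
            (pow_nonneg (abs_nonneg q) _)
    _ = |q|^(2*(j+1)) := mul_one _
    _ < 1 := pow_lt_one₀ (abs_nonneg q) hq1 (by omega)
  exact ⟨Units.oneSub _ hn, rfl⟩

end CCR

theorem comm_inv {a b : H →L[ℂ] H} (h : Commute a b) (hb : IsUnit b) :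
    Commute a (Ring.inverse b) := by
  obtain ⟨u, rfl⟩ := hb
  rw [Ring.inverse_unit]
  exact h.units_inv_right

theorem commGC (j : ℕ) : Commute (G α) (C q α j) :=
  (Commute.one_right _).sub_right ((Commute.refl _).smul_right _)

theorem commCC (i j : ℕ) : Commute (C q α i) (C q α j) :=
  (Commute.one_left _).sub_left ((commGC q α j).smul_left _)

section Main

variable (hccr : α * adjoint α - ((q : ℂ) ^ 2) • (adjoint α * α) =
      ((1 : ℂ) - (q : ℂ) ^ 2) • (1 : H →L[ℂ] H))
  (hq1 : |q| < 1)
include hccr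

theorem C_pow_adj (j k : ℕ) :
    C q α j * (adjoint α) ^ k = (adjoint α) ^ k * C q α (j + k) := by
  induction k generalizing j with
  | zero => simp
  | succ k ih =>
    rw [pow_succ, ← mul_assoc, ih j, mul_assoc, Ca q α hccr (j + k), ← mul_assoc,
      ← pow_succ, show j + k + 1 = j + (k + 1) by omega]

theorem pow_mul_C (j k : ℕ) :
    α ^ k * C q α j = C q α (j + k) * α ^ k := by
  induction k generalizing j with
  | zero => simp
  | succ k ih =>
    rw [pow_succ, mul_assoc, aC q α hccr j, ← mul_assoc, ih (j + 1), mul_assoc,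
      ← pow_succ, show j + 1 + k = j + (k + 1) by omega]

include hq1

theorem adj_inv (j : ℕ) :
    adjoint α * Ring.inverse (C q α (j + 1 + 1)) =
      Ring.inverse (C q α (j + 1)) * adjoint α := by
  have u1 := isUnitC q α hccr hq1 j
  have u2 := isUnitC q α hccr hq1 (j + 1)
  apply u1.mul_left_cancel
  rw [Ring.mul_inverse_cancel_left _ _ u1, ← mul_assoc,
    Ca q α hccr (j + 1), mul_assoc, Ring.mul_inverse_cancel _ u2, mul_one]

theorem pow_adj_inv (k : ℕ) :
    (adjoint α) ^ k * Ring.inverse (C q α (k + 1)) =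
      Ring.inverse (C q α 1) * (adjoint α) ^ k := by
  induction k with
  | zero => simp
  | succ k ih =>
    rw [pow_succ, mul_assoc, adj_inv q α hccr hq1 k, ← mul_assoc, ih, mul_assoc]

omit hq1 hccr

theorem P_eq (k : ℕ) : qCCRProj q α k = (adjoint α) ^ k * D q α k * α ^ k := rfl

theorem D_succ (k : ℕ) : D q α (k + 1) = D q α k * Ring.inverse (C q α (k + 1)) := by
  unfold D
  rw [List.range_succ, List.map_append, List.prod_append]
  simp

include hccr

theorem commCD (hq1 : |q| < 1) (m k : ℕ) : Commute (C q α m) (D q α k) := by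
  apply Commute.list_prod_right
  intro x hx
  simp only [List.mem_map, List.mem_range] at hx
  obtain ⟨j, -, rfl⟩ := hx
  exact comm_inv (commCC q α m (j + 1)) (isUnitC q α hccr hq1 j)

include hq1

theorem aP (k : ℕ) : α * qCCRProj q α (k + 1) = qCCRProj q α k * α := by
  rw [P_eq, P_eq, pow_succ' (adjoint α) k]
  have h1 : α * (adjoint α * (adjoint α) ^ k) = (adjoint α) ^ k * C q α (k + 1) := by
    rw [← mul_assoc, mul_adj q α hccr, C_pow_adj q α hccr 1 k, add_comm 1 k]
  have h2 : C q α (k + 1) * D q α (k + 1) = D q α k := by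
    rw [D_succ, ← mul_assoc, (commCD q α hccr hq1 (k + 1) k).eq, mul_assoc,
      Ring.mul_inverse_cancel _ (isUnitC q α hccr hq1 k), mul_one]
  calc α * (adjoint α * (adjoint α) ^ k * D q α (k + 1) * α ^ (k + 1))
      = α * (adjoint α * (adjoint α) ^ k) * D q α (k + 1) * α ^ (k + 1) := by
        simp only [mul_assoc]
    _ = (adjoint α) ^ k * (C q α (k + 1) * D q α (k + 1)) * α ^ (k + 1) := by
        rw [h1]; simp only [mul_assoc]
    _ = (adjoint α) ^ k * D q α k * α ^ (k + 1) := by rw [h2]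
    _ = (adjoint α) ^ k * D q α k * α ^ k * α := by
        rw [pow_succ]; simp only [mul_assoc]

theorem Pa (k : ℕ) :
    qCCRProj q α (k + 1) * adjoint α = adjoint α * qCCRProj q α k := by
  rw [P_eq, P_eq, pow_succ' (adjoint α) k]
  have h1 : α ^ (k + 1) * adjoint α = C q α (k + 1) * α ^ k := by
    rw [pow_succ, mul_assoc, mul_adj q α hccr, pow_mul_C q α hccr 1 k, add_comm 1 k]
  have h2 : D q α (k + 1) * C q α (k + 1) = D q α k := by
    rw [D_succ, mul_assoc, Ring.inverse_mul_cancel _ (isUnitC q α hccr hq1 k), mul_one]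
  calc adjoint α * (adjoint α) ^ k * D q α (k + 1) * α ^ (k + 1) * adjoint α
      = adjoint α * (adjoint α) ^ k * D q α (k + 1) * (α ^ (k + 1) * adjoint α) := by
        simp only [mul_assoc]
    _ = adjoint α * (adjoint α) ^ k * (D q α (k + 1) * C q α (k + 1)) * α ^ k := by
        rw [h1]; simp only [mul_assoc]
    _ = adjoint α * ((adjoint α) ^ k * D q α k * α ^ k) := by
        rw [h2]; simp only [mul_assoc]

theorem P_rec (k : ℕ) :
    qCCRProj q α (k + 1) =
      adjoint α * Ring.inverse (C q α 1) * qCCRProj q α k * α := by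
  rw [P_eq, P_eq, pow_succ' (adjoint α) k, pow_succ α k, D_succ]
  have h1 : D q α k * Ring.inverse (C q α (k + 1)) =
      Ring.inverse (C q α (k + 1)) * D q α k :=
    (comm_inv (commCD q α hccr hq1 (k + 1) k).symm (isUnitC q α hccr hq1 k)).symm.eq.symm
  calc adjoint α * (adjoint α) ^ k * (D q α k * Ring.inverse (C q α (k + 1))) * (α ^ k * α)
      = adjoint α * ((adjoint α) ^ k * Ring.inverse (C q α (k + 1))) * D q α k * α ^ k * α := by
        rw [h1]; simp only [mul_assoc]
    _ = adjoint α * (Ring.inverse (C q α 1) * (adjoint α) ^ k) * D q α k * α ^ k * α := by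
        rw [pow_adj_inv q α hccr hq1 k]
    _ = adjoint α * Ring.inverse (C q α 1) * ((adjoint α) ^ k * D q α k * α ^ k) * α := by
        simp only [mul_assoc]

theorem E_rec (k : ℕ) :
    qCCRSpec q α (k + 1) =
      adjoint α * Ring.inverse (C q α 1) * qCCRSpec q α k * α := by
  unfold qCCRSpec
  rw [P_rec q α hccr hq1 (k + 1), P_rec q α hccr hq1 k]
  simp only [mul_sub, sub_mul, mul_assoc]

theorem GE (k : ℕ) :
    G α * qCCRSpec q α k = ((q : ℂ) ^ (2 * k)) • qCCRSpec q α k := by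
  induction k with
  | zero =>
    have u1 : IsUnit (C q α 1) := isUnitC q α hccr hq1 0
    have hP0 : qCCRProj q α 0 = 1 := by
      simp [qCCRProj]
    have hP1 : qCCRProj q α 1 = adjoint α * Ring.inverse (C q α 1) * α := by
      rw [P_eq]
      unfold D C G
      norm_num [show List.range 1 = [0] from rfl]
    have key : adjoint α * α * qCCRProj q α 1 = adjoint α * α := by
      rw [hP1]
      calc adjoint α * α * (adjoint α * Ring.inverse (C q α 1) * α)
          = adjoint α * (α * adjoint α * Ring.inverse (C q α 1)) * α := by
            simp only [mul_assoc]
        _ = adjoint α * α := by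
            rw [mul_adj q α hccr, Ring.mul_inverse_cancel _ u1, mul_one]
    rw [show (2 * 0 : ℕ) = 0 from rfl, pow_zero, one_smul]
    unfold qCCRSpec
    rw [hP0, show (0 + 1 : ℕ) = 1 from rfl]
    unfold G
    rw [sub_mul, one_mul, mul_sub, mul_one, key]
    abel
  | succ k ih =>
    rw [E_rec q α hccr hq1 k]
    have hGa := Ga q α hccr
    have hcomm : G α * Ring.inverse (C q α 1) = Ring.inverse (C q α 1) * G α :=
      (comm_inv (commGC q α 1) (isUnitC q α hccr hq1 0)).eq
    calc G α * (adjoint α * Ring.inverse (C q α 1) * qCCRSpec q α k * α)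
        = G α * adjoint α * (Ring.inverse (C q α 1) * (qCCRSpec q α k * α)) := by
          simp only [mul_assoc]
      _ = ((q : ℂ) ^ 2) • (adjoint α * (G α * Ring.inverse (C q α 1)) *
            (qCCRSpec q α k * α)) := by
          rw [hGa]; simp only [smul_mul_assoc, mul_assoc]
      _ = ((q : ℂ) ^ 2) • (adjoint α * Ring.inverse (C q α 1) *
            (G α * qCCRSpec q α k * α)) := by
          rw [hcomm]; simp only [mul_assoc]
      _ = ((q : ℂ) ^ (2 * (k + 1))) •
            (adjoint α * Ring.inverse (C q α 1) * qCCRSpec q α k * α) := by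
          rw [ih]
          simp only [smul_mul_assoc, mul_smul_comm, smul_smul, ← pow_add, mul_assoc]
          rw [show 2 + 2 * k = 2 * (k + 1) by omega]

theorem adjE (k : ℕ) :
    adjoint α * qCCRSpec q α k = qCCRSpec q α (k + 1) * adjoint α := by
  unfold qCCRSpec
  rw [mul_sub, sub_mul, Pa q α hccr hq1 k, Pa q α hccr hq1 (k + 1)]

theorem aE (k : ℕ) :
    α * qCCRSpec q α (k + 1) = qCCRSpec q α k * α := by
  unfold qCCRSpec
  rw [mul_sub, sub_mul, aP q α hccr hq1 k, aP q α hccr hq1 (k + 1)]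

end Main

end QCCRAux

/-- **`α*` implements unitaries between the eigenspaces.** For `ξ` in the range of
`E_k`, `α* ξ` lies in the range of `E_{k+1}` with `‖α* ξ‖² = (1 − q^{2(k+1)}) ‖ξ‖²`;
conversely, for `η` in the range of `E_{k+1}`, `α η` lies in the range of `E_k` with
`‖α η‖² = (1 − q^{2(k+1)}) ‖η‖²`. -/
theorem qCCR_adjoint_unitary_between_eigenspaces
    {H : Type*} [NormedAddCommGroup H] [InnerProductSpace ℂ H] [CompleteSpace H]
    (q : ℝ) (hq0 : q ≠ 0) (hq1 : |q| < 1)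
    (α : H →L[ℂ] H)
    (hccr : α * adjoint α - ((q : ℂ) ^ 2) • (adjoint α * α) =
      ((1 : ℂ) - (q : ℂ) ^ 2) • (1 : H →L[ℂ] H))
    (hinj : Function.Injective ((1 : H →L[ℂ] H) - adjoint α * α)) :
    ∀ k : ℕ,
      (∀ ξ ∈ Set.range (qCCRSpec q α k),
        adjoint α ξ ∈ Set.range (qCCRSpec q α (k + 1)) ∧
        ‖adjoint α ξ‖ ^ 2 = (1 - q ^ (2 * (k + 1))) * ‖ξ‖ ^ 2) ∧
      (∀ η ∈ Set.range (qCCRSpec q α (k + 1)),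
        α η ∈ Set.range (qCCRSpec q α k) ∧
        ‖α η‖ ^ 2 = (1 - q ^ (2 * (k + 1))) * ‖η‖ ^ 2) := by
  intro k
  constructor
  · rintro ξ ⟨x, rfl⟩
    have hΓ : QCCRAux.G α (qCCRSpec q α k x) =
        ((q : ℂ) ^ (2 * k)) • qCCRSpec q α k x := by
      have h := DFunLike.congr_fun (QCCRAux.GE q α hccr hq1 k) x
      simpa [ContinuousLinearMap.mul_apply, ContinuousLinearMap.smul_apply] using h
    set ξ := qCCRSpec q α k x with hξ
    constructor
    · refine ⟨adjoint α x, ?_⟩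
      have h := DFunLike.congr_fun (QCCRAux.adjE q α hccr hq1 k) x
      simpa [ContinuousLinearMap.mul_apply] using h.symm
    · have happ : α (adjoint α ξ) = ((1 : ℂ) - (q : ℂ) ^ (2 * (k + 1))) • ξ := by
        have h := DFunLike.congr_fun (QCCRAux.mul_adj q α hccr) ξ
        simp only [ContinuousLinearMap.mul_apply] at h
        rw [h]
        show ((1 : H →L[ℂ] H) - ((q : ℂ) ^ (2 * 1)) • QCCRAux.G α) ξ = _
        rw [ContinuousLinearMap.sub_apply, ContinuousLinearMap.one_apply,
          ContinuousLinearMap.smul_apply, hΓ, smul_smul, ← pow_add,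
          show 2 * 1 + 2 * k = 2 * (k + 1) by omega, sub_smul, one_smul]
      have h1 : (inner ℂ (adjoint α ξ) (adjoint α ξ) : ℂ) =
          ((1 : ℂ) - (q : ℂ) ^ (2 * (k + 1))) * (inner ℂ ξ ξ : ℂ) := by
        rw [ContinuousLinearMap.adjoint_inner_left, happ, inner_smul_right]
      rw [inner_self_eq_norm_sq_to_K (𝕜 := ℂ), inner_self_eq_norm_sq_to_K (𝕜 := ℂ)] at h1
      norm_cast at h1
      have h2 : ((‖adjoint α ξ‖ ^ 2 : ℝ) : ℂ) =
          ((1 - q ^ (2 * (k + 1)) : ℝ) : ℂ) * ((‖ξ‖ ^ 2 : ℝ) : ℂ) := h1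
      exact_mod_cast h2
  · rintro η ⟨x, rfl⟩
    have hΓ : QCCRAux.G α (qCCRSpec q α (k + 1) x) =
        ((q : ℂ) ^ (2 * (k + 1))) • qCCRSpec q α (k + 1) x := by
      have h := DFunLike.congr_fun (QCCRAux.GE q α hccr hq1 (k + 1)) x
      simpa [ContinuousLinearMap.mul_apply, ContinuousLinearMap.smul_apply] using h
    set η := qCCRSpec q α (k + 1) x with hη
    constructor
    · refine ⟨α x, ?_⟩
      have h := DFunLike.congr_fun (QCCRAux.aE q α hccr hq1 k) x
      simpa [ContinuousLinearMap.mul_apply] using h.symm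
    · have happ : adjoint α (α η) = ((1 : ℂ) - (q : ℂ) ^ (2 * (k + 1))) • η := by
        have hid : adjoint α * α = 1 - QCCRAux.G α := by
          unfold QCCRAux.G; rw [sub_sub_cancel]
        have h := DFunLike.congr_fun hid η
        simp only [ContinuousLinearMap.mul_apply] at h
        rw [h, ContinuousLinearMap.sub_apply, ContinuousLinearMap.one_apply, hΓ,
          sub_smul, one_smul]
      have h1 : (inner ℂ (α η) (α η) : ℂ) =
          ((1 : ℂ) - (q : ℂ) ^ (2 * (k + 1))) * (inner ℂ η η : ℂ) := by
        rw [← ContinuousLinearMap.adjoint_inner_right, happ, inner_smul_right]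
      rw [inner_self_eq_norm_sq_to_K (𝕜 := ℂ), inner_self_eq_norm_sq_to_K (𝕜 := ℂ)] at h1
      norm_cast at h1
      have h2 : ((‖α η‖ ^ 2 : ℝ) : ℂ) =
          ((1 - q ^ (2 * (k + 1)) : ℝ) : ℂ) * ((‖η‖ ^ 2 : ℝ) : ℂ) := h1
      exact_mod_cast h2
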